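/- arXiv:1906.06484 — 2 statements merged into one kernel-verified Lean document; each statement's English description precedes it below -/
import Mathlib

section
/- (Strong consistency of the plug-in joint entropy estimator) E(p̂_{(X,Y)}^{(n)}) = -Σ_{i,j} p̂_{Z,δ_i^j}^{(n)} log p̂_{Z,δ_i^j}^{(n)} converges almost surely to E(p_{(X,Y)}) = -Σ_{i,j} p_{Z,δ_i^j} log p_{Z,δ_i^j} as n → ∞, with limsup_n |E(p̂^{(n)}) - E(p)|/a_{Z,n} ≤ Σ_k |1 + log p_{Z,k}| almost surely. -/
open MeasureTheory ProbabilityTheory Filter Real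

/-- Pointwise a.s. convergence of the empirical frequencies (SLLN per symbol). -/
theorem plugin_freq_tendsto
    {Ω : Type*} [MeasurableSpace Ω] (μ : Measure Ω) [IsProbabilityMeasure μ]
    {K : Type*} [Fintype K] [DecidableEq K] [Nonempty K] [MeasurableSpace K]
    [MeasurableSingletonClass K]
    (Z : ℕ → Ω → K) (p : K → ℝ)
    (hmeas : ∀ n, Measurable (Z n))
    (hindep : iIndepFun Z μ)
    (hdist : ∀ n k, (μ {ω | Z n ω = k}).toReal = p k)
    (phat : ℕ → Ω → K → ℝ)
    (hphat : ∀ n ω k, phat n ω k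
        = (n : ℝ)⁻¹ * ∑ ℓ ∈ Finset.range n, if Z ℓ ω = k then (1 : ℝ) else 0)
    (k : K) :
    ∀ᵐ ω ∂μ, Tendsto (fun n => phat n ω k) atTop (nhds (p k)) := by
  classical
  set f : K → ℝ := fun j => if j = k then (1 : ℝ) else 0 with hf
  have hfm : Measurable f := measurable_of_countable f
  set X : ℕ → Ω → ℝ := fun n ω => f (Z n ω) with hX
  have hXind : ∀ n, X n = (Z n ⁻¹' {k}).indicator (fun _ => (1 : ℝ)) := by
    intro n
    funext ω
    by_cases h : Z n ω = k
    · simp [hX, hf, h, Set.indicator_of_mem, Set.mem_preimage]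
    · simp [hX, hf, h, Set.indicator_of_notMem, Set.mem_preimage]
  have hmeasset : ∀ n, MeasurableSet (Z n ⁻¹' {k}) :=
    fun n => (hmeas n) (measurableSet_singleton k)
  have hint : Integrable (X 0) μ := by
    rw [hXind 0]
    exact (integrable_const (1 : ℝ)).indicator (hmeasset 0)
  have hindep' : Pairwise (Function.onFun (IndepFun · · μ) X) := by
    intro i j hij
    exact (hindep.indepFun hij).comp hfm hfm
  have hident : ∀ i, IdentDistrib (X i) (X 0) μ μ := by
    intro i
    have hZ : IdentDistrib (Z i) (Z 0) μ μ := by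
      refine ⟨(hmeas i).aemeasurable, (hmeas 0).aemeasurable, ?_⟩
      apply MeasureTheory.Measure.ext_of_singleton
      intro a
      rw [Measure.map_apply (hmeas i) (measurableSet_singleton a),
        Measure.map_apply (hmeas 0) (measurableSet_singleton a)]
      have h1 : (μ (Z i ⁻¹' {a})).toReal = (μ (Z 0 ⁻¹' {a})).toReal := by
        have e1 : Z i ⁻¹' {a} = {ω | Z i ω = a} := rfl
        have e2 : Z 0 ⁻¹' {a} = {ω | Z 0 ω = a} := rfl
        rw [e1, e2, hdist i a, hdist 0 a]
      exact (ENNReal.toReal_eq_toReal_iff' (measure_ne_top μ _) (measure_ne_top μ _)).mp h1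
    exact hZ.comp hfm
  have hmean : μ[X 0] = p k := by
    rw [hXind 0, integral_indicator_const (1 : ℝ) (hmeasset 0)]
    have : Z 0 ⁻¹' {k} = {ω | Z 0 ω = k} := rfl
    rw [this, smul_eq_mul, mul_one, Measure.real, hdist 0 k]
  have hSL := strong_law_ae_real X hint hindep' hident
  rw [hmean] at hSL
  filter_upwards [hSL] with ω hω
  have heq : (fun n => phat n ω k) = fun n : ℕ => (∑ i ∈ Finset.range n, X i ω) / n := by
    funext n
    rw [hphat n ω k, div_eq_inv_mul]
  rw [heq]
  exact hω

/-- Strong consistency of the plug-in joint entropy estimator: it converges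
almost surely to the true joint entropy, with the almost sure limsup bound
`limsup |E(p̂^{(n)}) - E(p)| / a_{Z,n} ≤ Σ_k |1 + log p_{Z,k}|`. -/
theorem plugin_entropy_consistency
    {Ω : Type*} [MeasurableSpace Ω] (μ : Measure Ω) [IsProbabilityMeasure μ]
    {K : Type*} [Fintype K] [DecidableEq K] [Nonempty K] [MeasurableSpace K] [MeasurableSingletonClass K]
    (Z : ℕ → Ω → K) (p : K → ℝ) (hp : ∀ k, 0 < p k)
    (hmeas : ∀ n, Measurable (Z n))
    (hindep : iIndepFun Z μ)
    (hdist : ∀ n k, (μ {ω | Z n ω = k}).toReal = p k)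
    (phat : ℕ → Ω → K → ℝ)
    (hphat : ∀ n ω k, phat n ω k
        = (n : ℝ)⁻¹ * ∑ ℓ ∈ Finset.range n, if Z ℓ ω = k then (1 : ℝ) else 0) :
    (∀ᵐ ω ∂μ, Tendsto
        (fun n : ℕ => -∑ k, phat n ω k * log (phat n ω k))
        atTop (nhds (-∑ k, p k * log (p k)))) ∧
    (∀ᵐ ω ∂μ, limsup (fun n : ℕ =>
        |(-∑ k, phat n ω k * log (phat n ω k)) - (-∑ k, p k * log (p k))| /
          (⨆ k : K, |phat n ω k - p k|)) atTop ≤ ∑ k, |1 + log (p k)|) := by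
  classical
  have hae : ∀ᵐ ω ∂μ, ∀ k, Tendsto (fun n => phat n ω k) atTop (nhds (p k)) :=
    ae_all_iff.mpr fun k =>
      plugin_freq_tendsto μ Z p hmeas hindep hdist phat hphat k
  constructor
  · filter_upwards [hae] with ω hω
    apply Tendsto.neg
    apply tendsto_finset_sum
    intro k _
    exact (hω k).mul (((Real.continuousAt_log (hp k).ne').tendsto).comp (hω k))
  · filter_upwards [hae] with ω hω
    set C : ℝ := ∑ k, |1 + log (p k)| with hC
    have hC0 : 0 ≤ C := Finset.sum_nonneg fun k _ => abs_nonneg _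
    -- the quantity is nonnegative
    have hnn : ∀ n : ℕ, 0 ≤
        |(-∑ k, phat n ω k * log (phat n ω k)) - (-∑ k, p k * log (p k))| /
          (⨆ k : K, |phat n ω k - p k|) :=
      fun n => div_nonneg (abs_nonneg _) (Real.iSup_nonneg fun k => abs_nonneg _)
    refine le_of_forall_pos_le_add ?_
    intro ε hε
    set m : ℕ := Fintype.card K with hm
    have hmpos : (0 : ℝ) < m := by
      have := Fintype.card_pos (α := K)
      exact_mod_cast this
    set ε' : ℝ := ε / m with hε'
    have hε'pos : 0 < ε' := div_pos hε hmpos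
    -- choose for each k a ball around p k where |1 + log x| is controlled and x > 0
    have hballs : ∀ k : K, ∃ δ > 0, ∀ x : ℝ, dist x (p k) < δ →
        |1 + log x| < |1 + log (p k)| + ε' ∧ 0 < x := by
      intro k
      have hc : ContinuousAt (fun x : ℝ => |1 + log x|) (p k) :=
        continuous_abs.continuousAt.comp
          (continuousAt_const.add (Real.continuousAt_log (hp k).ne'))
      have h1 : ∀ᶠ x in nhds (p k), |1 + log x| < |1 + log (p k)| + ε' :=
        hc.eventually_lt_const (lt_add_of_pos_right _ hε'pos)
      have h2 : ∀ᶠ x in nhds (p k), (0 : ℝ) < x := eventually_gt_nhds (hp k)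
      exact Metric.eventually_nhds_iff.mp (h1.and h2)
    choose δ hδpos hball using hballs
    -- eventually all empirical frequencies are in the balls
    have hev : ∀ᶠ n in atTop, ∀ k : K, dist (phat n ω k) (p k) < δ k := by
      rw [eventually_all]
      intro k
      have := (hω k) (Metric.ball_mem_nhds (p k) (hδpos k))
      simpa [Metric.mem_ball] using this
    apply limsup_le_of_le (isCoboundedUnder_le_of_le atTop hnn)
    filter_upwards [hev] with n hn
    set a : ℝ := ⨆ k : K, |phat n ω k - p k| with ha
    have ha0 : 0 ≤ a := Real.iSup_nonneg fun k => abs_nonneg _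
    have hle : ∀ k : K, |phat n ω k - p k| ≤ a := by
      intro k
      rw [ha]
      exact le_ciSup (f := fun j : K => |phat n ω j - p j|) ((Set.finite_range _).bddAbove) k
    -- per-coordinate MVT bound
    have hkey : ∀ k : K,
        |p k * log (p k) - phat n ω k * log (phat n ω k)|
          ≤ (|1 + log (p k)| + ε') * a := by
      intro k
      have hmem1 : phat n ω k ∈ Metric.ball (p k) (δ k) := by
        simpa [Metric.mem_ball] using hn k
      have hmem2 : p k ∈ Metric.ball (p k) (δ k) := Metric.mem_ball_self (hδpos k)
      have hmvt := Convex.norm_image_sub_le_of_norm_hasDerivWithin_le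
        (f := fun x : ℝ => x * log x) (f' := fun x : ℝ => log x + 1)
        (s := Metric.ball (p k) (δ k)) (C := |1 + log (p k)| + ε')
        (fun x hx => (Real.hasDerivAt_mul_log
          (ne_of_gt (hball k x (by simpa [Metric.mem_ball] using hx)).2)).hasDerivWithinAt)
        (fun x hx => by
          have h := (hball k x (by simpa [Metric.mem_ball] using hx)).1
          rw [Real.norm_eq_abs]
          calc |log x + 1| = |1 + log x| := by rw [add_comm]
          _ ≤ |1 + log (p k)| + ε' := le_of_lt h)
        (convex_ball _ _) hmem1 hmem2
      rw [Real.norm_eq_abs, Real.norm_eq_abs] at hmvt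
      calc |p k * log (p k) - phat n ω k * log (phat n ω k)|
          ≤ (|1 + log (p k)| + ε') * |p k - phat n ω k| := hmvt
        _ = (|1 + log (p k)| + ε') * |phat n ω k - p k| := by rw [abs_sub_comm]
        _ ≤ (|1 + log (p k)| + ε') * a :=
            mul_le_mul_of_nonneg_left (hle k)
              (add_nonneg (abs_nonneg _) (le_of_lt hε'pos))
    -- sum the bounds
    have hnum : |(-∑ k, phat n ω k * log (phat n ω k)) - (-∑ k, p k * log (p k))|
        ≤ (C + ε) * a := by
      have e1 : (-∑ k, phat n ω k * log (phat n ω k)) - (-∑ k, p k * log (p k))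
          = ∑ k, (p k * log (p k) - phat n ω k * log (phat n ω k)) := by
        rw [Finset.sum_sub_distrib]
        ring
      rw [e1]
      calc |∑ k, (p k * log (p k) - phat n ω k * log (phat n ω k))|
          ≤ ∑ k, |p k * log (p k) - phat n ω k * log (phat n ω k)| :=
            Finset.abs_sum_le_sum_abs _ _
        _ ≤ ∑ k, (|1 + log (p k)| + ε') * a :=
            Finset.sum_le_sum fun k _ => hkey k
        _ = (C + ε) * a := by
            rw [← Finset.sum_mul, Finset.sum_add_distrib, Finset.sum_const,
              Finset.card_univ, ← hm, nsmul_eq_mul, hε', hC]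
            congr 2
            field_simp
    rcases ha0.eq_or_lt with h0 | hpos
    · rw [← h0, div_zero]
      exact add_nonneg hC0 (le_of_lt hε)
    · exact (div_le_iff₀ hpos).mpr hnum
end

section
/- (Strong consistency of the plug-in mutual information estimator) E_{S.m.i.}(p̂_{(X,Y)}^{(n)}) = Σ_{i,j} p̂_{Z,δ_i^j}^{(n)} log(p̂_{Z,δ_i^j}^{(n)}/(p̂_{X,i}^{(n)} p̂_{Y,j}^{(n)})) converges almost surely to E_{S.m.i.}(p_{(X,Y)}) = Σ_{i,j} p_{i,j} log(p_{i,j}/(p_{X,i} p_{Y,j})) as n → ∞. -/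
open MeasureTheory ProbabilityTheory Filter Real

theorem slln_aux {Ω : Type*} [MeasurableSpace Ω] (μ : Measure Ω) [IsProbabilityMeasure μ]
    {r s : ℕ}
    (Z : ℕ → Ω → Fin r × Fin s) (p : Fin r × Fin s → ℝ)
    (hmeas : ∀ n, Measurable (Z n))
    (hindep : iIndepFun Z μ)
    (hdist : ∀ n k, (μ {ω | Z n ω = k}).toReal = p k)
    (k : Fin r × Fin s) :
    ∀ᵐ ω ∂μ, Tendsto (fun n : ℕ => (n:ℝ)⁻¹ * ∑ ℓ ∈ Finset.range n, if Z ℓ ω = k then (1:ℝ) else 0)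
      atTop (nhds (p k)) := by
  set X : ℕ → Ω → ℝ := fun ℓ ω => if Z ℓ ω = k then (1:ℝ) else 0 with hX
  have hsetmeas : ∀ ℓ, MeasurableSet {ω | Z ℓ ω = k} :=
    fun ℓ => (hmeas ℓ) (measurableSet_eq : MeasurableSet {x | x = k})
  have hXeq : ∀ ℓ, X ℓ = Set.indicator {ω | Z ℓ ω = k} (fun _ => (1:ℝ)) := by
    intro ℓ; ext ω; by_cases h : Z ℓ ω = k <;> simp [X, h, Set.indicator]
  have hint : Integrable (X 0) μ := by
    rw [hXeq]; exact (integrable_const 1).indicator (hsetmeas 0)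
  have hmapZ : ∀ n, Measure.map (Z n) μ = Measure.map (Z 0) μ := by
    intro n
    apply Measure.ext_of_singleton
    intro a
    rw [Measure.map_apply (hmeas n) (MeasurableSet.singleton a),
        Measure.map_apply (hmeas 0) (MeasurableSet.singleton a)]
    rw [← ENNReal.toReal_eq_toReal_iff' (measure_ne_top μ _) (measure_ne_top μ _)]
    have h1 := hdist n a; have h2 := hdist 0 a
    simp only [Set.preimage, Set.mem_singleton_iff]
    rw [h1, h2]
  set g : Fin r × Fin s → ℝ := fun a => if a = k then (1:ℝ) else 0 with hg
  have hgm : Measurable g := Measurable.of_discrete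
  have hident : ∀ i, IdentDistrib (X i) (X 0) μ μ := by
    intro i
    have : IdentDistrib (Z i) (Z 0) μ μ :=
      ⟨(hmeas i).aemeasurable, (hmeas 0).aemeasurable, hmapZ i⟩
    exact this.comp hgm
  have hpind : Pairwise (Function.onFun (IndepFun · · μ) X) := by
    intro i j hij
    exact ((hindep.indepFun hij).comp hgm hgm)
  have hmean : μ[X 0] = p k := by
    rw [hXeq 0, MeasureTheory.integral_indicator_const (1:ℝ) (hsetmeas 0), smul_eq_mul, mul_one,
      measureReal_def, hdist 0 k]
  have := strong_law_ae X hint hpind hident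
  rw [hmean] at this
  filter_upwards [this] with ω hω
  simpa [smul_eq_mul, hX] using hω

/-- Strong consistency of the plug-in Shannon mutual information estimator:
it converges almost surely to the true mutual information
(terms with vanishing empirical frequency are `0` since `Real.log 0 = 0`
and `0 * log 0 = 0`). -/
theorem plugin_mutualInformation_consistency
    {Ω : Type*} [MeasurableSpace Ω] (μ : Measure Ω) [IsProbabilityMeasure μ]
    (r s : ℕ) (hr : 0 < r) (hs : 0 < s)
    (Z : ℕ → Ω → Fin r × Fin s) (p : Fin r × Fin s → ℝ) (hp : ∀ k, 0 < p k)
    (hmeas : ∀ n, Measurable (Z n))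
    (hindep : iIndepFun Z μ)
    (hdist : ∀ n k, (μ {ω | Z n ω = k}).toReal = p k)
    (phat : ℕ → Ω → Fin r × Fin s → ℝ)
    (hphat : ∀ n ω k, phat n ω k
        = (n : ℝ)⁻¹ * ∑ ℓ ∈ Finset.range n, if Z ℓ ω = k then (1 : ℝ) else 0) :
    ∀ᵐ ω ∂μ, Tendsto
      (fun n : ℕ => ∑ ij : Fin r × Fin s, phat n ω ij *
        log (phat n ω ij / ((∑ j, phat n ω (ij.1, j)) * (∑ i, phat n ω (i, ij.2)))))
      atTop
      (nhds (∑ ij : Fin r × Fin s, p ij *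
        log (p ij / ((∑ j, p (ij.1, j)) * (∑ i, p (i, ij.2)))))) := by
  have hall : ∀ᵐ ω ∂μ, ∀ k, Tendsto (fun n : ℕ => phat n ω k) atTop (nhds (p k)) := by
    rw [ae_all_iff]
    intro k
    filter_upwards [slln_aux μ Z p hmeas hindep hdist k] with ω hω
    simp only [hphat]; exact hω
  filter_upwards [hall] with ω hω
  apply tendsto_finset_sum
  intro ij _
  have hA : Tendsto (fun n => ∑ j, phat n ω (ij.1, j)) atTop (nhds (∑ j, p (ij.1, j))) :=
    tendsto_finset_sum _ (fun j _ => hω (ij.1, j))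
  have hB : Tendsto (fun n => ∑ i, phat n ω (i, ij.2)) atTop (nhds (∑ i, p (i, ij.2))) :=
    tendsto_finset_sum _ (fun i _ => hω (i, ij.2))
  have hApos : 0 < ∑ j, p (ij.1, j) :=
    Finset.sum_pos (fun j _ => hp _) (by simp [Finset.univ_nonempty_iff]; exact ⟨⟨0, hs⟩⟩)
  have hBpos : 0 < ∑ i, p (i, ij.2) :=
    Finset.sum_pos (fun i _ => hp _) (by simp [Finset.univ_nonempty_iff]; exact ⟨⟨0, hr⟩⟩)
  have hdiv : Tendsto (fun n => phat n ω ij / ((∑ j, phat n ω (ij.1, j)) * (∑ i, phat n ω (i, ij.2))))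
      atTop (nhds (p ij / ((∑ j, p (ij.1, j)) * (∑ i, p (i, ij.2))))) :=
    (hω ij).div (hA.mul hB) (ne_of_gt (mul_pos hApos hBpos))
  exact (hω ij).mul (hdiv.log (ne_of_gt (div_pos (hp ij) (mul_pos hApos hBpos))))
end
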